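/- Let A and P be arbitrary real quaternions, and let e₁ = 1, e₂ = i, e₃ = j, e₄ = k be the standard quaternion basis. Define the 4×4 real matrix M by letting M i j be the j-th real coordinate (in the order re, imI, imJ, imK) of the quaternion A * eᵢ * P. Then M * Mᵀ = (‖A‖² * ‖P‖²) • (identity matrix); in particular the four quaternions A * eᵢ * P are pairwise orthogonal in ℝ⁴ and each has squared Euclidean norm ‖A‖² * ‖P‖². -/

import Mathlib

set_option linter.unnecessarySimpa false
set_option maxHeartbeats 1000000


open Quaternion Matrix

/-- The standard quaternion basis `1, i, j, k`. -/
noncomputable def quatBasis : Fin 4 → ℍ[ℝ]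
  | 0 => 1
  | 1 => ⟨0, 1, 0, 0⟩
  | 2 => ⟨0, 0, 1, 0⟩
  | 3 => ⟨0, 0, 0, 1⟩

/-- The real coordinates of a quaternion, in the order `re, imI, imJ, imK`. -/
def quatCoord (x : ℍ[ℝ]) : Fin 4 → ℝ
  | 0 => x.re
  | 1 => x.imI
  | 2 => x.imJ
  | 3 => x.imK

theorem euler_hurwitz_rows (A P : ℍ[ℝ])
    (M : Matrix (Fin 4) (Fin 4) ℝ)
    (hM : ∀ i j, M i j = quatCoord (A * quatBasis i * P) j) :
    M * Mᵀ = (‖A‖ ^ 2 * ‖P‖ ^ 2) • (1 : Matrix (Fin 4) (Fin 4) ℝ) ∧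
    (∀ i j : Fin 4, i ≠ j → ∑ k, M i k * M j k = 0) ∧
    (∀ i : Fin 4, ∑ k, (M i k) ^ 2 = ‖A‖ ^ 2 * ‖P‖ ^ 2) := by
  have hs : ‖A‖ ^ 2 * ‖P‖ ^ 2 = normSq A * normSq P := by
    rw [sq, sq, normSq_eq_norm_mul_self, normSq_eq_norm_mul_self]
  have key : ∀ i j : Fin 4, ∑ k, M i k * M j k =
      if i = j then ‖A‖ ^ 2 * ‖P‖ ^ 2 else 0 := by
    intro i j
    fin_cases i <;> fin_cases j <;>
      simp only [hM, Fin.sum_univ_four, quatCoord, Quaternion.re_mul, Quaternion.imI_mul,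
        Quaternion.imJ_mul, Quaternion.imK_mul] <;>
      simp only [hM, hs, Fin.sum_univ_four, quatBasis, quatCoord, Quaternion.re_mul,
        Quaternion.imI_mul, Quaternion.imJ_mul, Quaternion.imK_mul, Quaternion.normSq_def', Quaternion.re_one, Quaternion.imI_one,
        Quaternion.imJ_one, Quaternion.imK_one, Fin.mk.injEq, show (0:ℕ)≠1 by decide,
        show (0:ℕ)≠2 by decide, show (0:ℕ)≠3 by decide, show (1:ℕ)≠0 by decide,
        show (1:ℕ)≠2 by decide, show (1:ℕ)≠3 by decide, show (2:ℕ)≠0 by decide,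
        show (2:ℕ)≠1 by decide, show (2:ℕ)≠3 by decide, show (3:ℕ)≠0 by decide,
        show (3:ℕ)≠1 by decide, show (3:ℕ)≠2 by decide, if_true, if_false, reduceIte] <;> ring
  refine ⟨?_, fun i j h => by rw [key]; simp [h], fun i => by
    simpa [sq, key i i] using (Finset.sum_congr rfl fun k _ => (sq (M i k)).symm : _)⟩
  ext i j
  rw [Matrix.mul_apply]
  simp only [Matrix.transpose_apply, Matrix.smul_apply, Matrix.one_apply, key i j, smul_eq_mul]
  split <;> simp
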